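/- In the multiparameter module M with basis e(a_1,…,a_s), a_i ∈ ℤ/k_iℤ, every nonzero submodule (under the operators X_i, Y_i of the standard construction) contains a basis vector e(a_1,…,a_s). Consequently M is simple. -/

import Mathlib

/-- The standard basis vector `e a` of the `K`-vector space with basis indexed by
`∏ i, ℤ/(k i)ℤ`. -/
def e (K : Type*) [Field K] {s : ℕ} (k : Fin s → ℕ) (a : ∀ i, ZMod (k i)) :
    (∀ i, ZMod (k i)) → K := Pi.single a 1

/-- Every nonzero submodule of the multiparameter module `M` (invariant under the
operators `X_i, Y_i` of the standard construction) contains a basis vector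
`e a`; consequently `M` is simple. -/
theorem stmt_14 {K : Type*} [Field K] (s m : ℕ) (hs : 1 ≤ s)
    (hm : 0 < m) (q : Kˣ) (hq : orderOf q = m)
    (h k : Fin s → ℕ) (hh : ∀ i, 0 < h i) (hdvd : ∀ i, h i ∣ m)
    (hk : ∀ i, k i = m / h i)
    (α β : Fin s → K) (hα : ∀ i, α i ≠ 0) (hβ : ∀ i, β i ≠ 0)
    (X Y : Fin s → ((∀ i, ZMod (k i)) → K) →ₗ[K] ((∀ i, ZMod (k i)) → K))
    (hX : ∀ (i : Fin s) (a : ∀ i, ZMod (k i)),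
      X i (e K k a) = α i • e K k (Function.update a i (a i + 1)))
    (hY : ∀ (i : Fin s) (a : ∀ i, ZMod (k i)),
      Y i (e K k a) = ((α i)⁻¹ * β i * ((q : K) ^ h i) ^ (a i - 1).val) •
        e K k (Function.update a i (a i - 1))) :
    (∀ P : Submodule K ((∀ i, ZMod (k i)) → K),
      (∀ i, ∀ v ∈ P, X i v ∈ P) → (∀ i, ∀ v ∈ P, Y i v ∈ P) → P ≠ ⊥ →
        ∃ a : ∀ i, ZMod (k i), e K k a ∈ P) ∧
    (∀ P : Submodule K ((∀ i, ZMod (k i)) → K),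
      (∀ i, ∀ v ∈ P, X i v ∈ P) → (∀ i, ∀ v ∈ P, Y i v ∈ P) → P = ⊥ ∨ P = ⊤) := by
  classical
  haveI hNZ : ∀ i, NeZero (k i) := fun i =>
    ⟨by rw [hk i]; exact (Nat.div_pos (Nat.le_of_dvd hm (hdvd i)) (hh i)).ne'⟩
  -- order of q ^ h i
  have hqh : ∀ i, orderOf (q ^ h i) = k i := by
    intro i
    rw [orderOf_pow' q (hh i).ne', hq, Nat.gcd_eq_right (hdvd i), hk i]
  -- injectivity of the eigenvalue map
  have hinj : ∀ (i : Fin s) (c d : ZMod (k i)),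
      ((q : K) ^ h i) ^ (c - 1).val = ((q : K) ^ h i) ^ (d - 1).val → c = d := by
    intro i c d hcd
    have hu : (q ^ h i) ^ (c - 1).val = (q ^ h i) ^ (d - 1).val := by
      ext
      push_cast
      exact hcd
    rw [pow_eq_pow_iff_modEq, hqh i] at hu
    have h1 : (c - 1).val = (d - 1).val := by
      have := hu
      unfold Nat.ModEq at this
      rwa [Nat.mod_eq_of_lt (ZMod.val_lt _), Nat.mod_eq_of_lt (ZMod.val_lt _)] at this
    have h2 : c - 1 = d - 1 := ZMod.val_injective _ h1
    exact by linear_combination h2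
  -- the eigenvalue
  set μ : ∀ i : Fin s, ZMod (k i) → K := fun i c => β i * ((q : K) ^ h i) ^ (c - 1).val with hμ
  have hμinj : ∀ (i : Fin s) (c d : ZMod (k i)), μ i c = μ i d → c = d := by
    intro i c d hcd
    apply hinj i
    have := mul_left_cancel₀ (hβ i) hcd
    exact this
  -- action of X i ∘ Y i on basis vectors
  have hZe : ∀ (i : Fin s) (a : (∀ i, ZMod (k i))), X i (Y i (e K k a)) = μ i (a i) • e K k a := by
    intro i a
    rw [hY, map_smul, hX]
    rw [smul_smul]
    congr 1
    · field_simp [hμ]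
      rw [mul_comm (α i), mul_assoc, mul_div_assoc, mul_div_cancel_left₀ _ (hα i)]
    · congr 1
      simp [Function.update_idem]
  -- decomposition of a vector into basis vectors
  have hdecomp : ∀ v : (∀ i, ZMod (k i)) → K, v = ∑ a : (∀ i, ZMod (k i)), v a • e K k a := by
    intro v
    funext b
    rw [Finset.sum_apply]
    simp only [e, Pi.smul_apply, Pi.single_apply, smul_eq_mul]
    simp
  -- action of X i ∘ Y i on general vectors
  have hZ : ∀ (i : Fin s) (v : (∀ i, ZMod (k i)) → K) (b : (∀ i, ZMod (k i))), X i (Y i v) b = μ i (b i) * v b := by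
    intro i v b
    conv_lhs => rw [hdecomp v]
    rw [map_sum, map_sum, Finset.sum_apply]
    rw [Finset.sum_eq_single b]
    · rw [map_smul, map_smul, hZe]
      simp only [Pi.smul_apply, smul_eq_mul, e, Pi.single_eq_same, mul_one]
      ring
    · intro c _ hc
      rw [map_smul, map_smul, hZe]
      simp [e, Pi.single_apply, Ne.symm hc]
    · simp
  -- the main claim
  have main : ∀ P : Submodule K ((∀ i, ZMod (k i)) → K),
      (∀ i, ∀ v ∈ P, X i v ∈ P) → (∀ i, ∀ v ∈ P, Y i v ∈ P) → P ≠ ⊥ →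
        ∃ a : (∀ i, ZMod (k i)), e K k a ∈ P := by
    intro P hXP hYP hPbot
    obtain ⟨v, hvP, hv0⟩ := Submodule.exists_mem_ne_zero_of_ne_bot hPbot
    have key : ∀ n : ℕ, ∀ v : (∀ i, ZMod (k i)) → K, v ∈ P → v ≠ 0 →
        (Finset.univ.filter fun a => v a ≠ 0).card ≤ n → ∃ a : (∀ i, ZMod (k i)), e K k a ∈ P := by
      intro n
      induction n with
      | zero =>
        intro v hvP hv0 hcard
        exfalso
        apply hv0
        funext b
        by_contra hb
        have : b ∈ Finset.univ.filter fun a => v a ≠ 0 := by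
          simp only [Finset.mem_filter, Finset.mem_univ, true_and]
          simpa using hb
        have := Finset.card_pos.mpr ⟨b, this⟩
        omega
      | succ n ih =>
        intro v hvP hv0 hcard
        obtain ⟨a, ha⟩ : ∃ a : (∀ i, ZMod (k i)), v a ≠ 0 := by
          by_contra hc
          push_neg at hc
          exact hv0 (funext fun b => hc b)
        by_cases hsing : ∀ b : (∀ i, ZMod (k i)), v b ≠ 0 → b = a
        · -- v is supported on a single point
          refine ⟨a, ?_⟩
          have hv : (v a)⁻¹ • v = e K k a := by
            funext b
            by_cases hb : b = a
            · subst hb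
              simp [e, inv_mul_cancel₀ ha]
            · have hvb : v b = 0 := by
                by_contra hb'
                exact hb (hsing b hb')
              simp [e, hvb, Pi.single_apply, Ne.symm hb]
          exact hv ▸ P.smul_mem _ hvP
        · push_neg at hsing
          obtain ⟨b, hb, hba⟩ := hsing
          obtain ⟨i, hi⟩ : ∃ i, b i ≠ a i := by
            by_contra hc
            push_neg at hc
            exact hba (funext hc)
          -- form w = X i (Y i v) - μ i (a i) • v
          set w : (∀ i, ZMod (k i)) → K := X i (Y i v) - μ i (a i) • v with hw
          have hwP : w ∈ P := P.sub_mem (hXP i _ (hYP i v hvP)) (P.smul_mem _ hvP)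
          have hwapp : ∀ c : (∀ i, ZMod (k i)), w c = (μ i (c i) - μ i (a i)) * v c := by
            intro c
            simp only [hw, Pi.sub_apply, Pi.smul_apply, smul_eq_mul, hZ]
            ring
          have hwa : w a = 0 := by rw [hwapp]; ring
          have hwb : w b ≠ 0 := by
            rw [hwapp]
            refine mul_ne_zero (sub_ne_zero.mpr ?_) hb
            intro hcd
            exact hi (hμinj i _ _ hcd)
          have hw0 : w ≠ 0 := fun hc => hwb (by rw [hc]; rfl)
          refine ih w hwP hw0 ?_
          have hsub : (Finset.univ.filter fun c => w c ≠ 0) ⊆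
              (Finset.univ.filter fun c => v c ≠ 0).erase a := by
            intro c hc
            simp only [Finset.mem_filter, Finset.mem_univ, true_and] at hc
            rw [Finset.mem_erase]
            constructor
            · intro hca; subst hca; exact hc hwa
            · simp only [Finset.mem_filter, Finset.mem_univ, true_and]
              intro hvc
              exact hc (by rw [hwapp, hvc, mul_zero])
          calc (Finset.univ.filter fun c => w c ≠ 0).card
              ≤ ((Finset.univ.filter fun c => v c ≠ 0).erase a).card :=
                Finset.card_le_card hsub
            _ ≤ (Finset.univ.filter fun c => v c ≠ 0).card - 1 := by
                rw [Finset.card_erase_of_mem (by simp [ha])]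
            _ ≤ n := by omega
    exact key _ v hvP hv0 (Nat.le_refl _)
  refine ⟨main, ?_⟩
  intro P hXP hYP
  by_cases hPbot : P = ⊥
  · exact Or.inl hPbot
  · right
    obtain ⟨a, ha⟩ := main P hXP hYP hPbot
    -- updating one coordinate stays in P
    have hup1 : ∀ (i : Fin s) (n : ℕ) (b : (∀ i, ZMod (k i))), e K k b ∈ P →
        e K k (Function.update b i (b i + n)) ∈ P := by
      intro i n
      induction n with
      | zero => intro b hb; simpa using hb
      | succ n ih =>
        intro b hb
        have h1 := ih b hb
        have h2 := hXP i _ h1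
        rw [hX] at h2
        have h3 : e K k (Function.update (Function.update b i (b i + n)) i
            (Function.update b i (b i + n) i + 1)) ∈ P := by
          have := P.smul_mem (α i)⁻¹ h2
          rwa [smul_smul, inv_mul_cancel₀ (hα i), one_smul] at this
        have heq : Function.update (Function.update b i (b i + (n : ZMod (k i)))) i
            (Function.update b i (b i + (n : ZMod (k i))) i + 1)
            = Function.update b i (b i + ((n + 1 : ℕ) : ZMod (k i))) := by
          rw [Function.update_self, Function.update_idem]
          congr 1
          push_cast
          ring
        rwa [heq] at h3
    have hup : ∀ (b : (∀ i, ZMod (k i))) (i : Fin s) (c : ZMod (k i)), e K k b ∈ P →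
        e K k (Function.update b i c) ∈ P := by
      intro b i c hb
      have hc : c = b i + ((c - b i).val : ZMod (k i)) := by
        rw [ZMod.natCast_val, ZMod.cast_id]
        ring
      rw [hc]
      exact hup1 i _ b hb
    have hall : ∀ c : (∀ i, ZMod (k i)), e K k c ∈ P := by
      intro c
      have hstep : ∀ t : Finset (Fin s),
          e K k (fun i => if i ∈ t then c i else a i) ∈ P := by
        intro t
        induction t using Finset.induction with
        | empty => simpa using ha
        | @insert j t hj iht =>
          have := hup _ j (c j) iht
          convert this using 2
          funext i
          by_cases hij : i = j
          · subst hij; simp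
          · simp [Function.update_apply, hij, Finset.mem_insert]
      have := hstep Finset.univ
      simpa using this
    rw [eq_top_iff]
    intro v _
    rw [hdecomp v]
    exact Submodule.sum_mem P fun c _ => P.smul_mem _ (hall c)
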